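/- For all x,z ∈ [0,2π] with (x,z) ∉ {(0,2π),(2π,0)}, one has the identity |sin(h̲(x,z)/2) · sin(h(x,z)/2)| = tan²((z−x)/4) · sin(x/2) · sin(z/2). -/

import Mathlib

open MeasureTheory Real Set

noncomputable section

/-- The dispersion relation `ω(p) = |sin(p/2)|`. -/
def ω (p : ℝ) : ℝ := |Real.sin (p / 2)|

/-- Parameterization `h(x,z)` of the resonant manifold. -/
def resH (x z : ℝ) : ℝ :=
  (z - x) / 2 + 2 * Real.arcsin (Real.tan (|z - x| / 4) * Real.cos ((x + z) / 4))

/-- `F₊(x,z) = (cos(x/2)+cos(z/2))² + 4 sin(x/2) sin(z/2)`. -/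
def Fplus (x z : ℝ) : ℝ :=
  (Real.cos (x / 2) + Real.cos (z / 2)) ^ 2 + 4 * Real.sin (x / 2) * Real.sin (z / 2)

/-- `F₋(x,z) = (cos(x/2)+cos(z/2))² − 4 sin(x/2) sin(z/2)`. -/
def Fminus (x z : ℝ) : ℝ :=
  (Real.cos (x / 2) + Real.cos (z / 2)) ^ 2 - 4 * Real.sin (x / 2) * Real.sin (z / 2)

/-- `h̲(x,z) = x − z + h(x,z)`. -/
def resHu (x z : ℝ) : ℝ := x - z + resH x z

lemma prodsin (u v : ℝ) :
    Real.sin (u - v) * Real.sin (u + v) = Real.sin u ^ 2 - Real.sin v ^ 2 := by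
  rw [Real.sin_sub, Real.sin_add]
  linear_combination (Real.sin u ^ 2) * Real.sin_sq_add_cos_sq v -
    (Real.sin v ^ 2) * Real.sin_sq_add_cos_sq u

lemma auxkey (a s θ : ℝ) (hθ : Real.sin θ = Real.tan |a| * Real.cos s)
    (hca : 0 < Real.cos a) (hn1 : 0 ≤ Real.sin (s - a)) (hn2 : 0 ≤ Real.sin (s + a)) :
    |Real.sin (θ - a) * Real.sin (θ + a)| =
      Real.tan a ^ 2 * Real.sin (s - a) * Real.sin (s + a) := by
  have hca' : Real.cos a ≠ 0 := ne_of_gt hca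
  have hta : Real.tan |a| ^ 2 = Real.tan a ^ 2 := by
    rcases abs_choice a with h | h <;> rw [h] <;> simp [Real.tan_neg]
  have hθ2 : Real.sin θ ^ 2 * Real.cos a ^ 2 = Real.sin a ^ 2 * Real.cos s ^ 2 := by
    have h : Real.sin θ ^ 2 = Real.tan a ^ 2 * Real.cos s ^ 2 := by
      rw [hθ, mul_pow, hta]
    rw [h, Real.tan_eq_sin_div_cos]
    field_simp
  have hR : Real.sin (s - a) * Real.sin (s + a) = Real.sin s ^ 2 - Real.sin a ^ 2 :=
    prodsin s a
  have htan2 : Real.tan a ^ 2 * Real.cos a ^ 2 = Real.sin a ^ 2 := by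
    rw [Real.tan_eq_sin_div_cos]; field_simp
  have hc2 : Real.cos a ^ 2 ≠ 0 := pow_ne_zero 2 hca'
  have hval : Real.sin θ ^ 2 - Real.sin a ^ 2 =
      -(Real.tan a ^ 2 * (Real.sin s ^ 2 - Real.sin a ^ 2)) := by
    apply mul_right_cancel₀ hc2
    linear_combination hθ2 + (Real.sin s ^ 2 - Real.sin a ^ 2) * htan2 +
      (Real.sin a ^ 2) * Real.sin_sq_add_cos_sq s -
      (Real.sin a ^ 2) * Real.sin_sq_add_cos_sq a
  have hnn : 0 ≤ Real.tan a ^ 2 * Real.sin (s - a) * Real.sin (s + a) :=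
    mul_nonneg (mul_nonneg (sq_nonneg _) hn1) hn2
  rw [prodsin θ a, hval, abs_neg,
    abs_of_nonneg (mul_nonneg (sq_nonneg _) (by rw [← hR]; exact mul_nonneg hn1 hn2))]
  rw [mul_assoc, hR]

/-- **Product identity:** for `x,z ∈ [0,2π]` with `(x,z) ∉ {(0,2π),(2π,0)}`,
`|sin(h̲(x,z)/2) · sin(h(x,z)/2)| = tan²((z−x)/4) · sin(x/2) · sin(z/2)`. -/
theorem stmt5 :
    ∀ x z : ℝ, x ∈ Set.Icc 0 (2 * π) → z ∈ Set.Icc 0 (2 * π) →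
      (x, z) ≠ ((0:ℝ), 2 * π) → (x, z) ≠ (2 * π, (0:ℝ)) →
      |Real.sin (resHu x z / 2) * Real.sin (resH x z / 2)| =
        Real.tan ((z - x) / 4) ^ 2 * Real.sin (x / 2) * Real.sin (z / 2) := by
  intro x z hx hz hne1 hne2
  obtain ⟨hx0, hx2⟩ := hx
  obtain ⟨hz0, hz2⟩ := hz
  have pi_pos := Real.pi_pos
  set a := (z - x) / 4 with ha
  set s := (x + z) / 4 with hs
  -- |a| < π/2
  have hlt1 : z - x < 2 * π := by
    rcases lt_or_eq_of_le (show z - x ≤ 2 * π by linarith) with h | h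
    · exact h
    · exfalso; apply hne1
      have hx' : x = 0 := by linarith
      have hz' : z = 2 * π := by linarith
      rw [hx', hz']
  have hlt2 : -(2 * π) < z - x := by
    rcases lt_or_eq_of_le (show -(2 * π) ≤ z - x by linarith) with h | h
    · exact h
    · exfalso; apply hne2
      have hx' : x = 2 * π := by linarith
      have hz' : z = 0 := by linarith
      rw [hx', hz']
  have halt : |a| < π / 2 := by
    rw [abs_lt]; constructor <;> [skip; skip] <;> rw [ha] <;> linarith
  have hca : 0 < Real.cos a :=
    Real.cos_pos_of_mem_Ioo ⟨(abs_lt.mp halt).1, (abs_lt.mp halt).2⟩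
  have hcaabs : Real.cos |a| = Real.cos a := Real.cos_abs a
  -- |cos s| ≤ cos |a|
  have habs_le_s : |a| ≤ s := by
    rw [abs_le]; constructor <;> rw [ha, hs] <;> linarith
  have hs_le : s ≤ π - |a| := by
    rcases abs_cases a with ⟨h, _⟩ | ⟨h, _⟩ <;> rw [h] <;> rw [ha, hs] <;> linarith
  have hcos_up : Real.cos s ≤ Real.cos |a| :=
    Real.cos_le_cos_of_nonneg_of_le_pi (abs_nonneg a)
      (by rw [hs]; linarith) habs_le_s
  have hcos_lo : -Real.cos |a| ≤ Real.cos s := by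
    have := Real.cos_le_cos_of_nonneg_of_le_pi
      (by rw [hs]; linarith : (0:ℝ) ≤ s) (by linarith [abs_nonneg a]) hs_le
    rw [Real.cos_pi_sub] at this
    linarith
  have hsinabs : 0 ≤ Real.sin |a| :=
    Real.sin_nonneg_of_nonneg_of_le_pi (abs_nonneg a) (by linarith)
  set t := Real.tan (|a|) * Real.cos s with ht
  have htabs : |t| ≤ 1 := by
    have h1 : |t| = Real.tan |a| * |Real.cos s| := by
      rw [ht, abs_mul, abs_of_nonneg
        (by rw [Real.tan_eq_sin_div_cos]; exact div_nonneg hsinabs (by rw [hcaabs]; linarith))]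
    have h2 : Real.tan |a| * |Real.cos s| ≤ Real.tan |a| * Real.cos |a| := by
      apply mul_le_mul_of_nonneg_left _ _
      · rw [abs_le]; exact ⟨hcos_lo, hcos_up⟩
      · rw [Real.tan_eq_sin_div_cos]
        exact div_nonneg hsinabs (by rw [hcaabs]; linarith)
    have h3 : Real.tan |a| * Real.cos |a| = Real.sin |a| := by
      rw [Real.tan_eq_sin_div_cos]
      exact div_mul_cancel₀ _ (by rw [hcaabs]; exact ne_of_gt hca)
    rw [h1]
    calc Real.tan |a| * |Real.cos s| ≤ Real.sin |a| := by rw [← h3]; exact h2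
      _ ≤ 1 := Real.sin_le_one _
  have hθ : Real.sin (Real.arcsin t) = t :=
    Real.sin_arcsin (by linarith [(abs_le.mp htabs).1]) (by linarith [(abs_le.mp htabs).2])
  have habs4 : |z - x| / 4 = |a| := by rw [ha, abs_div]; norm_num
  have e1 : resHu x z / 2 = Real.arcsin t - a := by
    simp only [resHu, resH, habs4, ← hs, ← ht, ha]
    ring
  have e2 : resH x z / 2 = Real.arcsin t + a := by
    simp only [resH, habs4, ← hs, ← ht, ha]
    ring
  have e3 : x / 2 = s - a := by rw [hs, ha]; ring
  have e4 : z / 2 = s + a := by rw [hs, ha]; ring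
  rw [e1, e2, e3, e4]
  exact auxkey a s (Real.arcsin t) (by rw [hθ, ht]) hca
    (by rw [← e3]; exact Real.sin_nonneg_of_nonneg_of_le_pi (by linarith) (by linarith))
    (by rw [← e4]; exact Real.sin_nonneg_of_nonneg_of_le_pi (by linarith) (by linarith))
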